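/- Let d, a, I : ℝ → ℝ be continuous ω-periodic functions with d(t) > 0, g : ℝ → ℝ Lipschitz with constant G, and suppose there exists α > 0 such that -(d(t) - α) + G|a(t)| ≤ 0 for all t. Then any two solutions u, v of u'(t) = -d(t)u(t) + a(t)g(u(t)) + I(t) satisfy |u(t) - v(t)| ≤ e^{-α t}|u(0) - v(0)| for all t ≥ 0. -/

import Mathlib

/-- exponential contraction of any two solutions of the scalar
periodic ODE u' = -d(t)u + a(t)g(u) + I(t). -/
theorem stmt2 (ω G α : ℝ) (d a I g u v : ℝ → ℝ)
    (hω : 0 < ω) (hd : Continuous d) (ha : Continuous a) (hI : Continuous I)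
    (hdper : Function.Periodic d ω) (haper : Function.Periodic a ω)
    (hIper : Function.Periodic I ω)
    (hdpos : ∀ t, 0 < d t)
    (hg : ∀ x y, |g x - g y| ≤ G * |x - y|)
    (hα : 0 < α) (hstab : ∀ t, -(d t - α) + G * |a t| ≤ 0)
    (hu : ∀ t, HasDerivAt u (-d t * u t + a t * g (u t) + I t) t)
    (hv : ∀ t, HasDerivAt v (-d t * v t + a t * g (v t) + I t) t) :
    ∀ t ≥ (0 : ℝ), |u t - v t| ≤ Real.exp (-α * t) * |u 0 - v 0| := by
  intro t ht
  set w : ℝ → ℝ := fun s => u s - v s with hw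
  have hw' : ∀ s, HasDerivAt w (-d s * w s + a s * (g (u s) - g (v s))) s := by
    intro s
    have h := (hu s).sub (hv s)
    refine h.congr_deriv ?_
    simp only [hw]; ring
  set f : ℝ → ℝ := fun s => (w s) ^ 2 with hf
  have hf' : ∀ s, HasDerivAt f (2 * w s * (-d s * w s + a s * (g (u s) - g (v s)))) s := by
    intro s
    have h := (hw' s).pow 2
    refine h.congr_deriv ?_
    push_cast
    ring
  have bound : ∀ s, 2 * w s * (-d s * w s + a s * (g (u s) - g (v s))) ≤ (-2 * α) * f s + 0 := by
    intro s
    have h1 : |a s * (g (u s) - g (v s))| ≤ G * |a s| * |w s| := by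
      rw [abs_mul]
      calc |a s| * |g (u s) - g (v s)| ≤ |a s| * (G * |u s - v s|) :=
            mul_le_mul_of_nonneg_left (hg (u s) (v s)) (abs_nonneg _)
        _ = G * |a s| * |w s| := by rw [hw]; ring
    have h2 : 2 * w s * (a s * (g (u s) - g (v s))) ≤ 2 * (G * |a s|) * (w s)^2 := by
      calc 2 * w s * (a s * (g (u s) - g (v s)))
          ≤ |2 * w s * (a s * (g (u s) - g (v s)))| := le_abs_self _
        _ = 2 * |w s| * |a s * (g (u s) - g (v s))| := by
            rw [abs_mul, abs_mul]
            simp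
        _ ≤ 2 * |w s| * (G * |a s| * |w s|) := by
            apply mul_le_mul_of_nonneg_left h1; positivity
        _ = 2 * (G * |a s|) * |w s|^2 := by ring
        _ = 2 * (G * |a s|) * (w s)^2 := by rw [sq_abs]
    have h3 : G * |a s| ≤ d s - α := by linarith [hstab s]
    simp only [hf]
    nlinarith [sq_nonneg (w s)]
  have hwc : Continuous w := by
    have hu' : Continuous u := continuous_iff_continuousAt.mpr fun s => (hu s).continuousAt
    have hv' : Continuous v := continuous_iff_continuousAt.mpr fun s => (hv s).continuousAt
    exact hu'.sub hv'
  have key : f t ≤ gronwallBound (f 0) (-2 * α) 0 (t - 0) := by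
    refine le_gronwallBound_of_liminf_deriv_right_le
      (f := f) (f' := fun s => 2 * w s * (-d s * w s + a s * (g (u s) - g (v s))))
      (a := 0) (b := t) ((hwc.pow 2).continuousOn) ?_ le_rfl
      (fun x _ => bound x) t (Set.mem_Icc.mpr ⟨ht, le_rfl⟩)
    intro x _ r hr
    exact ((hf' x).hasDerivWithinAt (s := Set.Ici x)).liminf_right_slope_le hr
  rw [sub_zero, gronwallBound_ε0] at key
  have hexp : Real.exp (-2 * α * t) = (Real.exp (-α * t))^2 := by
    rw [← Real.exp_nat_mul]
    ring_nf
  have h0 : (0:ℝ) ≤ Real.exp (-α * t) * |u 0 - v 0| := by positivity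
  have hsq : (u t - v t)^2 ≤ (Real.exp (-α * t) * |u 0 - v 0|)^2 := by
    have : f t ≤ (w 0)^2 * (Real.exp (-α * t))^2 := by rw [← hexp]; exact key
    simp only [hf, hw] at this ⊢
    calc (u t - v t)^2 ≤ (u 0 - v 0)^2 * (Real.exp (-α * t))^2 := this
      _ = (Real.exp (-α * t) * |u 0 - v 0|)^2 := by rw [mul_pow, sq_abs]; ring
  nlinarith [abs_nonneg (u t - v t), sq_abs (u t - v t)]
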